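/- Let N, C be positive integers with C ∣ N, let ι be a real number with Cι ∈ ℤ, and let d be an integer with sin(πd/N) ≠ 0 and sin(π(Cι+d)/C) ≠ 0. Then |∑_{q=0}^{C−1} e^{i2πιq} ∑_{n=qN/C}^{(q+1)N/C−1} e^{i(2π/N)dn}| = |sin(π(Cι+d))/sin(π(Cι+d)/C)| · |sin(πd/C)/sin(πd/N)|. -/

import Mathlib

open Complex Finset

lemma abs_exp_mul_I_sub_one' (θ : ℝ) :
    ‖Complex.exp (θ * Complex.I) - 1‖ = 2 * |Real.sin (θ / 2)| := by
  rw [show ((θ : ℂ) * Complex.I) = ((θ : ℝ) : ℂ) * Complex.I from rfl, Complex.exp_mul_I]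
  have h1 : ‖Complex.cos θ + Complex.sin θ * Complex.I - 1‖
      = Real.sqrt ((Real.cos θ - 1) ^ 2 + Real.sin θ ^ 2) := by
    rw [Complex.norm_def, Complex.normSq_apply]
    simp [Complex.cos_ofReal_re, Complex.sin_ofReal_re, Complex.cos_ofReal_im,
      Complex.sin_ofReal_im]
    ring_nf
  rw [h1]
  have h2 : (Real.cos θ - 1) ^ 2 + Real.sin θ ^ 2 = (2 * |Real.sin (θ / 2)|) ^ 2 := by
    have hh := Real.sin_sq_eq_half_sub (θ / 2)
    have h3 : 2 * (θ / 2) = θ := by ring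
    rw [h3] at hh
    have h4 : |Real.sin (θ / 2)| ^ 2 = Real.sin (θ / 2) ^ 2 := sq_abs _
    have h5 := Real.sin_sq_add_cos_sq θ
    nlinarith [hh, h4, h5]
  rw [h2, Real.sqrt_sq (by positivity)]

lemma abs_geom_exp (θ : ℝ) (K : ℕ) (h : Real.sin (θ / 2) ≠ 0) :
    ‖∑ k ∈ Finset.range K, Complex.exp (θ * k * Complex.I)‖ =
      |Real.sin (K * θ / 2) / Real.sin (θ / 2)| := by
  have hx : Complex.exp (θ * Complex.I) ≠ 1 := by
    intro hc
    have h0 : ‖Complex.exp ((θ : ℂ) * Complex.I) - 1‖ = 0 := by rw [hc]; simp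
    rw [abs_exp_mul_I_sub_one'] at h0
    simp only [mul_eq_zero] at h0
    rcases h0 with h2 | h2
    · norm_num at h2
    · exact h (abs_eq_zero.mp h2)
  have hsum : ∑ k ∈ Finset.range K, Complex.exp (θ * k * Complex.I)
      = (Complex.exp (θ * Complex.I) ^ K - 1) / (Complex.exp (θ * Complex.I) - 1) := by
    rw [← geom_sum_eq hx]
    refine Finset.sum_congr rfl fun k _ => ?_
    rw [← Complex.exp_nat_mul]
    ring_nf
  rw [hsum, norm_div, ← Complex.exp_nat_mul]
  have hk : (K : ℂ) * ((θ : ℂ) * Complex.I) = ((K * θ : ℝ) : ℂ) * Complex.I := by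
    push_cast; ring
  rw [hk, abs_exp_mul_I_sub_one', abs_exp_mul_I_sub_one', abs_div,
    mul_div_mul_left _ _ (by norm_num : (2:ℝ) ≠ 0)]

theorem afdm_magnitude_factorization (N C : ℕ) (hN : 0 < N) (hC : 0 < C)
    (hdvd : C ∣ N) (ι : ℝ) (hι : ∃ z : ℤ, (C : ℝ) * ι = z) (d : ℤ)
    (hsinN : Real.sin (Real.pi * d / N) ≠ 0)
    (hsinC : Real.sin (Real.pi * ((C : ℝ) * ι + d) / C) ≠ 0) :
    ‖∑ q ∈ Finset.range C,
        Complex.exp (2 * Real.pi * ι * q * Complex.I) *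
          ∑ n ∈ Finset.Ico (q * (N / C)) ((q + 1) * (N / C)),
            Complex.exp ((2 * Real.pi / N) * d * n * Complex.I)‖ =
      |Real.sin (Real.pi * ((C : ℝ) * ι + d)) /
          Real.sin (Real.pi * ((C : ℝ) * ι + d) / C)| *
        |Real.sin (Real.pi * d / C) / Real.sin (Real.pi * d / N)| := by
  obtain ⟨M, hM⟩ := hdvd
  have hMdiv : N / C = M := by rw [hM]; exact Nat.mul_div_cancel_left M hC
  have hM0 : 0 < M := by
    rcases Nat.eq_zero_or_pos M with h | h
    · rw [h, Nat.mul_zero] at hM; omega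
    · exact h
  have hC0 : (C : ℝ) ≠ 0 := Nat.cast_ne_zero.mpr hC.ne'
  have hN0 : (N : ℝ) ≠ 0 := Nat.cast_ne_zero.mpr hN.ne'
  have hM0' : (M : ℝ) ≠ 0 := Nat.cast_ne_zero.mpr hM0.ne'
  have hNC : (N : ℝ) = (C : ℝ) * (M : ℝ) := by exact_mod_cast congrArg Nat.cast hM
  set θ1 : ℝ := 2 * Real.pi * ι + 2 * Real.pi * d / C with hθ1
  set θ2 : ℝ := 2 * Real.pi * d / N with hθ2
  have key : ∑ q ∈ Finset.range C,
        Complex.exp (2 * Real.pi * ι * q * Complex.I) *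
          ∑ n ∈ Finset.Ico (q * (N / C)) ((q + 1) * (N / C)),
            Complex.exp ((2 * Real.pi / N) * d * n * Complex.I)
      = (∑ q ∈ Finset.range C, Complex.exp (θ1 * q * Complex.I)) *
        (∑ k ∈ Finset.range M, Complex.exp (θ2 * k * Complex.I)) := by
    rw [Finset.sum_mul]
    refine Finset.sum_congr rfl fun q _ => ?_
    rw [hMdiv, Finset.sum_Ico_eq_sum_range]
    have hsub : (q + 1) * M - q * M = M := by
      rw [add_mul, one_mul]; omega
    rw [hsub, Finset.mul_sum, Finset.mul_sum]
    refine Finset.sum_congr rfl fun k _ => ?_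
    rw [← Complex.exp_add, ← Complex.exp_add]
    congr 1
    have hreal : 2 * Real.pi * ι * q + (2 * Real.pi / N) * d * (q * M + k)
        = θ1 * q + θ2 * k := by
      rw [hθ1, hθ2, hNC]
      field_simp
      ring
    have hcast : ((2 * Real.pi * ι * q : ℝ) : ℂ) + ((2 * Real.pi / N) * d * (q * M + k) : ℝ)
        = ((θ1 * q : ℝ) : ℂ) + ((θ2 * k : ℝ) : ℂ) := by exact_mod_cast hreal
    push_cast at hcast ⊢
    linear_combination hcast * Complex.I
  rw [key, norm_mul]
  have e1 : θ1 / 2 = Real.pi * ((C : ℝ) * ι + d) / C := by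
    rw [hθ1]; field_simp
  have e2 : (C : ℝ) * θ1 / 2 = Real.pi * ((C : ℝ) * ι + d) := by
    rw [hθ1]; field_simp
  have e3 : θ2 / 2 = Real.pi * d / N := by rw [hθ2]; ring
  have e4 : (M : ℝ) * θ2 / 2 = Real.pi * d / C := by
    rw [hθ2, hNC]; field_simp
  rw [abs_geom_exp θ1 C (by rw [e1]; exact hsinC),
    abs_geom_exp θ2 M (by rw [e3]; exact hsinN), e1, e2, e3, e4]
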